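/- arXiv:2605.00006 — 3 statements merged into one kernel-verified Lean document; each statement's English description precedes it below -/
import Mathlib

section
/- Define σ(φ₀, Δθ) = arccos(sin²φ₀ + cos²φ₀ · cos Δθ). For all φ₀ ∈ [0, π/2] and Δθ ∈ [-π, π], 2 cos φ₀ · |sin(Δθ/2)| ≤ σ(φ₀, Δθ) ≤ |Δθ|. -/
open Real in
theorem sigma_two_sided_bounds (φ₀ Δθ : ℝ)
    (hφ : φ₀ ∈ Set.Icc 0 (π / 2)) (hθ : Δθ ∈ Set.Icc (-π) π) :
    2 * cos φ₀ * |sin (Δθ / 2)| ≤ arccos (sin φ₀ ^ 2 + cos φ₀ ^ 2 * cos Δθ) ∧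
    arccos (sin φ₀ ^ 2 + cos φ₀ ^ 2 * cos Δθ) ≤ |Δθ| := by
  obtain ⟨hφ0, hφ1⟩ := hφ
  obtain ⟨hθ0, hθ1⟩ := hθ
  have hc : 0 ≤ cos φ₀ := Real.cos_nonneg_of_mem_Icc ⟨by linarith [Real.pi_pos], hφ1⟩
  have hc1 : cos φ₀ ≤ 1 := Real.cos_le_one _
  have hsabs : |sin (Δθ / 2)| ≤ 1 := Real.abs_sin_le_one _
  have hsabs0 : (0:ℝ) ≤ |sin (Δθ / 2)| := abs_nonneg _
  set t := cos φ₀ * |sin (Δθ / 2)| with ht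
  have ht0 : 0 ≤ t := mul_nonneg hc hsabs0
  have ht1 : t ≤ 1 := by nlinarith
  -- key identity
  have hcosΔ : cos Δθ = 1 - 2 * sin (Δθ / 2) ^ 2 := by
    have h1 : cos (2 * (Δθ / 2)) = 2 * cos (Δθ / 2) ^ 2 - 1 := Real.cos_two_mul _
    have h2 := Real.sin_sq_add_cos_sq (Δθ / 2)
    have h3 : 2 * (Δθ / 2) = Δθ := by ring
    rw [h3] at h1
    nlinarith
  have hE : sin φ₀ ^ 2 + cos φ₀ ^ 2 * cos Δθ = 1 - 2 * t ^ 2 := by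
    have h1 := Real.sin_sq_add_cos_sq φ₀
    have h2 : |sin (Δθ / 2)| ^ 2 = sin (Δθ / 2) ^ 2 := sq_abs _
    rw [hcosΔ, ht]
    nlinarith
  have anti : ∀ x y : ℝ, x ≤ y → arccos y ≤ arccos x := by
    intro x y h
    unfold Real.arccos
    have := Real.monotone_arcsin h
    linarith
  constructor
  · -- lower bound
    have h2t : 2 * t ≤ π := by nlinarith [Real.pi_gt_three]
    have hcos2t : 1 - 2 * t ^ 2 ≤ cos (2 * t) := by
      have := Real.one_sub_sq_div_two_le_cos (x := 2 * t)
      nlinarith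
    calc 2 * cos φ₀ * |sin (Δθ / 2)| = 2 * t := by ring
      _ = arccos (cos (2 * t)) := (Real.arccos_cos (by linarith) h2t).symm
      _ ≤ arccos (1 - 2 * t ^ 2) := anti _ _ hcos2t
      _ = arccos (sin φ₀ ^ 2 + cos φ₀ ^ 2 * cos Δθ) := by rw [hE]
  · -- upper bound
    have hEc : cos Δθ ≤ sin φ₀ ^ 2 + cos φ₀ ^ 2 * cos Δθ := by
      have h1 := Real.sin_sq_add_cos_sq φ₀
      have h2 : cos Δθ ≤ 1 := Real.cos_le_one _
      nlinarith [sq_nonneg (sin φ₀)]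
    calc arccos (sin φ₀ ^ 2 + cos φ₀ ^ 2 * cos Δθ) ≤ arccos (cos Δθ) := anti _ _ hEc
      _ = arccos (cos |Δθ|) := by rw [Real.cos_abs]
      _ = |Δθ| := Real.arccos_cos (abs_nonneg _) (abs_le.mpr ⟨hθ0, hθ1⟩)
end

section
/- Define σ(φ₀, Δθ) = arccos(sin²φ₀ + cos²φ₀ · cos Δθ). Then σ(φ₀, Δθ) = cos φ₀ · |Δθ| + O(|Δθ|³) as Δθ → 0; equivalently, (σ(φ₀, Δθ) - cos φ₀ · |Δθ|)/|Δθ|³ is bounded in a punctured neighborhood of 0. -/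
open Real

lemma arcsin_le_add_cube {x : ℝ} (hx0 : 0 ≤ x) (hx : x ≤ 1/2) :
    arcsin x ≤ x + x^3 := by
  rcases eq_or_lt_of_le hx0 with h | h
  · simp [← h]
  have hpi : (3:ℝ) < π := Real.pi_gt_three
  have hx3 : x^3 ≤ (1/2:ℝ)^3 := pow_le_pow_left₀ hx0 hx 3
  have hx2 : x^2 ≤ (1/2:ℝ)^2 := pow_le_pow_left₀ hx0 hx 2
  have h1 : x + x^3 ≤ 1 := by norm_num at hx3 ⊢; linarith
  have hgt := Real.sin_gt_sub_cube (by positivity : (0:ℝ) < x + x^3)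
  have hy : x + x^3 ≤ (5/4) * x := by nlinarith
  have hy3 : (x + x^3)^3 ≤ ((5/4) * x)^3 := pow_le_pow_left₀ (by positivity) hy 3
  have hsin : x ≤ sin (x + x^3) := by nlinarith [pow_pos h 3]
  have : arcsin x ≤ arcsin (sin (x + x^3)) := Real.monotone_arcsin hsin
  rwa [Real.arcsin_sin (by nlinarith [pow_nonneg hx0 3, Real.pi_gt_three]) (by nlinarith [Real.pi_gt_three])] at this

theorem sigma_local_expansion (φ₀ : ℝ) (hφ : φ₀ ∈ Set.Icc 0 (π / 2)) :
    ∃ C ε : ℝ, 0 < C ∧ 0 < ε ∧ ∀ Δθ : ℝ, Δθ ≠ 0 → |Δθ| ≤ ε →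
      abs (arccos (sin φ₀ ^ 2 + cos φ₀ ^ 2 * cos Δθ) - cos φ₀ * |Δθ|) ≤ C * |Δθ| ^ 3 := by
  refine ⟨1, 1, one_pos, one_pos, ?_⟩
  intro Δθ hne hle
  have hpi : (3:ℝ) < π := Real.pi_gt_three
  set t := |Δθ| with ht
  have ht0 : 0 < t := abs_pos.mpr hne
  have ht1 : t ≤ 1 := hle
  set c := cos φ₀ with hcdef
  have hc0 : 0 ≤ c := Real.cos_nonneg_of_mem_Icc ⟨by linarith [hφ.1], hφ.2⟩
  have hc1 : c ≤ 1 := Real.cos_le_one _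
  set s := sin (t/2) with hsdef
  have hs0 : 0 ≤ s := Real.sin_nonneg_of_nonneg_of_le_pi (by positivity) (by linarith)
  have hs : s ≤ t/2 := Real.sin_le (by positivity)
  have hslow : t/2 - (t/2)^3/4 < s := by
    have := Real.sin_gt_sub_cube (x := t/2) (by positivity)
    nlinarith [pow_pos (by positivity : (0:ℝ) < t/2) 3]
  have hx0 : 0 ≤ c * s := mul_nonneg hc0 hs0
  have hxh : c * s ≤ 1/2 := by nlinarith
  have hx1 : c * s ≤ 1 := by linarith
  set a := arcsin (c * s) with hadef
  have ha0 : 0 ≤ a := Real.arcsin_nonneg.mpr hx0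
  have ha2 : a ≤ π/2 := Real.arcsin_le_pi_div_two _
  have hkey : arccos (sin φ₀ ^ 2 + cos φ₀ ^ 2 * cos Δθ) = 2 * a := by
    have hcos2 : cos (2 * a) = sin φ₀ ^ 2 + cos φ₀ ^ 2 * cos Δθ := by
      rw [Real.cos_two_mul, hadef, Real.cos_arcsin,
        Real.sq_sqrt (by nlinarith : (0:ℝ) ≤ 1 - (c*s)^2)]
      have h1 : cos Δθ = cos t := (Real.cos_abs Δθ).symm
      have h2 := Real.sin_sq_eq_half_sub (t/2)
      rw [show 2*(t/2) = t by ring] at h2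
      have h3 := sin_sq_add_cos_sq φ₀
      rw [h1]
      nlinarith
    rw [← hcos2, Real.arccos_cos (by linarith) (by linarith)]
  rw [hkey]
  have hsinlea : c * s ≤ a := by
    have := Real.sin_le ha0
    rw [hadef, Real.sin_arcsin (by linarith) hx1] at this
    linarith
  have haup : a ≤ c * s + (c*s)^3 := arcsin_le_add_cube hx0 hxh
  rw [abs_le]
  constructor
  · nlinarith
  · nlinarith [pow_le_pow_left₀ hx0 (show c * s ≤ t/2 by nlinarith) 3]
end

section
/- Let φ₀ ∈ [0, π/2], s ≥ 2 an integer, Δ > 0, and define S(s, φ₀) = Σ_{j=0}^{s-1} σ(φ₀, (j − (s−1)/2)Δ)², where σ(φ₀, t) = arccos(sin²φ₀ + cos²φ₀ cos t). Assume (s/2)Δ ≤ π. Then (4/π²) cos²φ₀ · (Δ²/12)(s² − 1) ≤ (1/s) S(s, φ₀) ≤ (Δ²/12)(s² − 1). -/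
open Real in
private lemma arccos_le_arccos' {x y : ℝ} (h : x ≤ y) : arccos y ≤ arccos x := by
  rw [arccos_eq_pi_div_two_sub_arcsin, arccos_eq_pi_div_two_sub_arcsin]
  have := Real.monotone_arcsin h
  linarith

private lemma sum_id_real (n : ℕ) :
    ∑ j ∈ Finset.range n, (j : ℝ) = n * (n - 1) / 2 := by
  induction n with
  | zero => simp
  | succ k ih => rw [Finset.sum_range_succ, ih]; push_cast; ring

private lemma sum_sq_real (n : ℕ) :
    ∑ j ∈ Finset.range n, (j : ℝ) ^ 2 = n * (n - 1) * (2 * n - 1) / 6 := by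
  induction n with
  | zero => simp
  | succ k ih => rw [Finset.sum_range_succ, ih]; push_cast; ring

private lemma sum_centered_sq (s : ℕ) :
    ∑ j ∈ Finset.range s, ((j : ℝ) - ((s : ℝ) - 1) / 2) ^ 2
      = (s : ℝ) * ((s : ℝ) ^ 2 - 1) / 12 := by
  have expand : ∀ j ∈ Finset.range s, ((j : ℝ) - ((s : ℝ) - 1) / 2) ^ 2
      = (j : ℝ) ^ 2 - ((s : ℝ) - 1) * (j : ℝ) + (((s : ℝ) - 1) / 2) ^ 2 := by
    intro j _; ring
  rw [Finset.sum_congr rfl expand]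
  rw [Finset.sum_add_distrib, Finset.sum_sub_distrib, Finset.sum_const, ← Finset.mul_sum,
    sum_id_real, sum_sq_real, Finset.card_range, nsmul_eq_mul]
  ring

open Real in
private lemma pointwise_bounds (φ₀ t : ℝ) (hφ : φ₀ ∈ Set.Icc 0 (π / 2)) (ht : |t| ≤ π) :
    (2 / π * cos φ₀) ^ 2 * t ^ 2
      ≤ (arccos (sin φ₀ ^ 2 + cos φ₀ ^ 2 * cos t)) ^ 2 ∧
    (arccos (sin φ₀ ^ 2 + cos φ₀ ^ 2 * cos t)) ^ 2 ≤ t ^ 2 := by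
  obtain ⟨hφ0, hφ1⟩ := hφ
  have hπ := Real.pi_gt_three
  set c := cos φ₀ with hc
  have hc0 : 0 ≤ c := Real.cos_nonneg_of_mem_Icc ⟨by linarith, hφ1⟩
  have hc1 : c ≤ 1 := Real.cos_le_one φ₀
  set a := sin φ₀ ^ 2 + c ^ 2 * cos t with ha
  have hsc : sin φ₀ ^ 2 + c ^ 2 = 1 := Real.sin_sq_add_cos_sq φ₀
  have hcos_half : cos t = 1 - 2 * sin (t / 2) ^ 2 := by
    have h2 : cos (2 * (t / 2)) = 2 * cos (t / 2) ^ 2 - 1 := Real.cos_two_mul (t / 2)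
    have h3 := Real.sin_sq_add_cos_sq (t / 2)
    have he : (2 : ℝ) * (t / 2) = t := by ring
    rw [he] at h2; linarith
  have ha_eq : a = 1 - 2 * (c * sin (t / 2)) ^ 2 := by
    rw [ha, hcos_half]; nlinarith
  have hσ0 : 0 ≤ arccos a := Real.arccos_nonneg a
  -- upper bound
  have hcota : cos t ≤ a := by nlinarith [Real.cos_le_one t, Real.neg_one_le_cos t]
  have hupper : arccos a ≤ |t| := by
    have h1 : arccos a ≤ arccos (cos |t|) := by
      rw [Real.cos_abs]; exact arccos_le_arccos' hcota
    rwa [Real.arccos_cos (abs_nonneg t) ht] at h1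
  have hup2 : (arccos a) ^ 2 ≤ t ^ 2 := by
    rw [← sq_abs t]; exact pow_le_pow_left₀ hσ0 hupper 2
  -- lower bound
  set u := c * |sin (t / 2)| with hu
  have hsabs : |sin (t / 2)| ≤ 1 :=
    abs_le.mpr ⟨Real.neg_one_le_sin _, Real.sin_le_one _⟩
  have hu0 : 0 ≤ u := mul_nonneg hc0 (abs_nonneg _)
  have hu1 : u ≤ 1 := by nlinarith
  have hsinu0 : 0 ≤ sin u := Real.sin_nonneg_of_nonneg_of_le_pi hu0 (by linarith)
  have hsinu : sin u ≤ u := Real.sin_le hu0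
  have hcos2u : a ≤ cos (2 * u) := by
    have h2 : cos (2 * u) = 2 * cos u ^ 2 - 1 := Real.cos_two_mul u
    have h3 := Real.sin_sq_add_cos_sq u
    have hsq : (c * sin (t / 2)) ^ 2 = u ^ 2 := by
      rw [hu, mul_pow, mul_pow, sq_abs]
    nlinarith
  have h2u : 2 * u ≤ arccos a := by
    have h1 : arccos (cos (2 * u)) ≤ arccos a := arccos_le_arccos' hcos2u
    rwa [Real.arccos_cos (by linarith) (by linarith)] at h1
  -- the sine concavity bound
  have habs_sin : |sin (t / 2)| = sin (|t| / 2) := by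
    rcases le_or_gt 0 t with h | h
    · rw [abs_of_nonneg h, abs_of_nonneg]
      exact Real.sin_nonneg_of_nonneg_of_le_pi (by linarith)
        (by rw [abs_of_nonneg h] at ht; linarith)
    · have h1 : 0 ≤ sin (-(t / 2)) := by
        apply Real.sin_nonneg_of_nonneg_of_le_pi (by linarith)
        rw [abs_of_neg h] at ht; linarith
      rw [Real.sin_neg] at h1
      rw [abs_of_neg h, abs_of_nonpos (by linarith), ← Real.sin_neg]
      ring_nf
  have hsinlb : 2 / π * (|t| / 2) ≤ |sin (t / 2)| := by
    rw [habs_sin]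
    exact Real.mul_le_sin (by positivity) (by linarith)
  have hx2u : 2 / π * c * |t| ≤ 2 * u := by
    have := mul_le_mul_of_nonneg_left hsinlb hc0
    have hπ0 : (0 : ℝ) < π := Real.pi_pos
    rw [hu]
    nlinarith
  have hx0 : 0 ≤ 2 / π * c * |t| := by positivity
  have hle : 2 / π * c * |t| ≤ arccos a := le_trans hx2u h2u
  constructor
  · have : (2 / π * c * |t|) ^ 2 ≤ (arccos a) ^ 2 :=
      pow_le_pow_left₀ hx0 hle 2
    calc (2 / π * c) ^ 2 * t ^ 2 = (2 / π * c * |t|) ^ 2 := by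
          rw [← sq_abs t]; ring
      _ ≤ (arccos a) ^ 2 := this
  · exact hup2

open Real in
theorem block_distortion_bounds (φ₀ Δ : ℝ) (s : ℕ)
    (hφ : φ₀ ∈ Set.Icc 0 (π / 2)) (hs : 2 ≤ s) (hΔ : 0 < Δ)
    (hspan : (s : ℝ) / 2 * Δ ≤ π)
    (S : ℝ)
    (hS : S = ∑ j ∈ Finset.range s,
        (arccos (sin φ₀ ^ 2 + cos φ₀ ^ 2 * cos (((j : ℝ) - ((s : ℝ) - 1) / 2) * Δ))) ^ 2) :
    (4 / π ^ 2) * cos φ₀ ^ 2 * (Δ ^ 2 / 12) * ((s : ℝ) ^ 2 - 1) ≤ (1 / (s : ℝ)) * S ∧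
    (1 / (s : ℝ)) * S ≤ (Δ ^ 2 / 12) * ((s : ℝ) ^ 2 - 1) := by
  have hs0 : (0 : ℝ) < s := by positivity
  have hsR : (2 : ℝ) ≤ (s : ℝ) := by exact_mod_cast hs
  have hπ0 : (0 : ℝ) < π := Real.pi_pos
  have ht_bound : ∀ j ∈ Finset.range s, |((j : ℝ) - ((s : ℝ) - 1) / 2) * Δ| ≤ π := by
    intro j hj
    have hjs : (j : ℝ) ≤ (s : ℝ) - 1 := by
      have := Finset.mem_range.mp hj
      have : (j : ℝ) + 1 ≤ (s : ℝ) := by exact_mod_cast this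
      linarith
    have hj0 : (0 : ℝ) ≤ (j : ℝ) := Nat.cast_nonneg j
    rw [abs_mul, abs_of_pos hΔ]
    have habs : |(j : ℝ) - ((s : ℝ) - 1) / 2| ≤ ((s : ℝ) - 1) / 2 :=
      abs_le.mpr ⟨by linarith, by linarith⟩
    calc |(j : ℝ) - ((s : ℝ) - 1) / 2| * Δ ≤ ((s : ℝ) - 1) / 2 * Δ :=
          mul_le_mul_of_nonneg_right habs hΔ.le
      _ ≤ (s : ℝ) / 2 * Δ := by nlinarith
      _ ≤ π := hspan
  have hsum_t : ∑ j ∈ Finset.range s, (((j : ℝ) - ((s : ℝ) - 1) / 2) * Δ) ^ 2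
      = (s : ℝ) * ((s : ℝ) ^ 2 - 1) / 12 * Δ ^ 2 := by
    rw [← sum_centered_sq s, Finset.sum_mul]
    exact Finset.sum_congr rfl fun j _ => by ring
  have hlow : (2 / π * cos φ₀) ^ 2 * ((s : ℝ) * ((s : ℝ) ^ 2 - 1) / 12 * Δ ^ 2) ≤ S := by
    rw [← hsum_t, Finset.mul_sum, hS]
    exact Finset.sum_le_sum fun j hj =>
      (pointwise_bounds φ₀ _ hφ (ht_bound j hj)).1
  have hhigh : S ≤ (s : ℝ) * ((s : ℝ) ^ 2 - 1) / 12 * Δ ^ 2 := by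
    rw [← hsum_t, hS]
    exact Finset.sum_le_sum fun j hj =>
      (pointwise_bounds φ₀ _ hφ (ht_bound j hj)).2
  have hinv : (0 : ℝ) ≤ 1 / (s : ℝ) := by positivity
  constructor
  · have key : (4 / π ^ 2) * cos φ₀ ^ 2 * (Δ ^ 2 / 12) * ((s : ℝ) ^ 2 - 1)
        = (1 / (s : ℝ)) * ((2 / π * cos φ₀) ^ 2 * ((s : ℝ) * ((s : ℝ) ^ 2 - 1) / 12 * Δ ^ 2)) := by
      field_simp
      ring
    rw [key]
    exact mul_le_mul_of_nonneg_left hlow hinv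
  · have key : (Δ ^ 2 / 12) * ((s : ℝ) ^ 2 - 1)
        = (1 / (s : ℝ)) * ((s : ℝ) * ((s : ℝ) ^ 2 - 1) / 12 * Δ ^ 2) := by
      field_simp
    rw [key]
    exact mul_le_mul_of_nonneg_left hhigh hinv
end
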